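/- Let Γ be a finite digraph and A = Aut(Γ). Suppose V(Γ) is partitioned into sets G₁,…,G_m, each stabilized setwise by A, and suppose a subgroup R ≤ A acts regularly on each G_i with the G_i as R-orbits. If for each i there exists a vertex u_i ∈ G_i such that the stabilizer A_{u_i} fixes every out-neighbor of u_i, and Γ is connected, then A = R. -/
import Mathlib


/-- A permutation `σ` is an automorphism of the digraph with arc relation `Arc`. -/
def isAut {V : Type*} (Arc : V → V → Prop) (σ : Equiv.Perm V) : Prop :=
  ∀ u v, Arc u v ↔ Arc (σ u) (σ v)

lemma isAut_mul {V : Type*} {Arc : V → V → Prop} {σ τ : Equiv.Perm V}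
    (hσ : isAut Arc σ) (hτ : isAut Arc τ) : isAut Arc (σ * τ) := by
  intro u v
  simpa [Equiv.Perm.mul_apply] using (hτ u v).trans (hσ (τ u) (τ v))

lemma isAut_inv {V : Type*} {Arc : V → V → Prop} {σ : Equiv.Perm V}
    (hσ : isAut Arc σ) : isAut Arc σ⁻¹ := by
  intro u v
  have := hσ (σ⁻¹ u) (σ⁻¹ v)
  simpa using this.symm

theorem stmt_9 {V : Type*} [Fintype V] (Arc : V → V → Prop) {m : ℕ}
    (P : Fin m → Set V)
    (hcover : ∀ v, ∃ i, v ∈ P i)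
    (hdisj : ∀ i j, i ≠ j → P i ∩ P j = ∅)
    (hstab : ∀ σ : Equiv.Perm V, isAut Arc σ → ∀ i, σ '' P i = P i)
    (R : Subgroup (Equiv.Perm V))
    (hRaut : ∀ σ ∈ R, isAut Arc σ)
    (hRstab : ∀ σ ∈ R, ∀ i, σ '' P i = P i)
    (hreg : ∀ i : Fin m, ∀ u ∈ P i, ∀ v ∈ P i, ∃! σ : Equiv.Perm V, σ ∈ R ∧ σ u = v)
    (hfix : ∀ i : Fin m, ∃ u ∈ P i, ∀ σ : Equiv.Perm V, isAut Arc σ → σ u = u →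
      ∀ v, Arc u v → σ v = v)
    (hconn : ∀ u v : V, Relation.ReflTransGen (fun a b => Arc a b ∨ Arc b a) u v) :
    ∀ σ : Equiv.Perm V, isAut Arc σ → σ ∈ R := by
  -- Key fact A: any automorphism fixing a vertex w fixes all out-neighbors of w.
  have keyA : ∀ τ : Equiv.Perm V, isAut Arc τ → ∀ w, τ w = w → ∀ v, Arc w v → τ v = v := by
    intro τ hτ w hw v hv
    obtain ⟨i, hwi⟩ := hcover w
    obtain ⟨u, hui, hu⟩ := hfix i
    obtain ⟨ρ, ⟨hρR, hρu⟩, -⟩ := hreg i u hui w hwi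
    have hρaut := hRaut ρ hρR
    have hφaut : isAut Arc (ρ⁻¹ * τ * ρ) :=
      isAut_mul (isAut_mul (isAut_inv hρaut) hτ) hρaut
    have hφu : (ρ⁻¹ * τ * ρ) u = u := by
      simp only [Equiv.Perm.mul_apply]
      rw [hρu, hw, ← hρu]
      simp
    have harc : Arc u (ρ⁻¹ v) := by
      have h := hρaut u (ρ⁻¹ v)
      rw [h, hρu]
      simpa using hv
    have h1 := hu _ hφaut hφu (ρ⁻¹ v) harc
    have h2 : ρ⁻¹ (τ v) = ρ⁻¹ v := by
      simpa [Equiv.Perm.mul_apply] using h1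
    exact (ρ⁻¹ : Equiv.Perm V).injective h2
  -- Key fact B: an element of R with a fixed point is the identity.
  have keyB : ∀ ρ ∈ R, ∀ w : V, ρ w = w → ρ = 1 := by
    intro ρ hρ w hw
    obtain ⟨i, hwi⟩ := hcover w
    obtain ⟨ψ, -, huniq⟩ := hreg i w hwi w hwi
    have h1 := huniq ρ ⟨hρ, hw⟩
    have h2 := huniq 1 ⟨R.one_mem, by simp⟩
    rw [h1, h2]
  intro σ hσ
  by_cases hV : Nonempty V
  · obtain ⟨u₀⟩ := hV
    obtain ⟨i, hu₀⟩ := hcover u₀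
    have hσu₀ : σ u₀ ∈ P i := by
      rw [← hstab σ hσ i]; exact ⟨u₀, hu₀, rfl⟩
    obtain ⟨ρ, ⟨hρR, hρ⟩, -⟩ := hreg i u₀ hu₀ (σ u₀) hσu₀
    have hτaut : isAut Arc (ρ⁻¹ * σ) := isAut_mul (isAut_inv (hRaut ρ hρR)) hσ
    have hτu₀ : (ρ⁻¹ * σ) u₀ = u₀ := by
      simp [Equiv.Perm.mul_apply, ← hρ]
    have hfixall : ∀ v, (ρ⁻¹ * σ) v = v := by
      intro v
      induction hconn u₀ v with
      | refl => exact hτu₀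
      | tail h hbc ih =>
        rcases hbc with hbc | hbc
        · exact keyA _ hτaut _ ih _ hbc
        · rename_i b c
          obtain ⟨j, hcj⟩ := hcover c
          have hτc : (ρ⁻¹ * σ) c ∈ P j := by
            rw [← hstab _ hτaut j]; exact ⟨c, hcj, rfl⟩
          obtain ⟨ρ', ⟨hρ'R, hρ'⟩, -⟩ := hreg j c hcj _ hτc
          have hτ'aut : isAut Arc (ρ'⁻¹ * (ρ⁻¹ * σ)) :=
            isAut_mul (isAut_inv (hRaut ρ' hρ'R)) hτaut
          have hfixc : (ρ'⁻¹ * (ρ⁻¹ * σ)) c = c := by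
            simp [Equiv.Perm.mul_apply, ← hρ']
          have hb := keyA _ hτ'aut c hfixc b hbc
          have h2 : ρ'⁻¹ b = b := by
            simpa [Equiv.Perm.mul_apply, ih] using hb
          have h3 : ρ' b = b := by
            conv_lhs => rw [← h2]
            simp
          have h4 : ρ' = 1 := keyB ρ' hρ'R b h3
          rw [h4] at hρ'
          simpa using hρ'.symm
    have hσρ : σ = ρ := by
      ext v
      have := hfixall v
      simp [Equiv.Perm.mul_apply] at this
      exact ((ρ⁻¹ : Equiv.Perm V).injective (by simpa using this) : σ v = ρ v)
    rw [hσρ]; exact hρR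
  · have : σ = 1 := Equiv.ext fun v => absurd ⟨v⟩ hV
    rw [this]; exact R.one_mem
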